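/- arXiv:1504.07875 — 7 statements merged into one kernel-verified Lean document; each statement's English description precedes it below -/
import Mathlib

section
/- Let p1, p2, q1, q2 be positive integers with p1 ≥ 2, p2 ≥ 2, p1 < q1, gcd(p1,q1) = 1 and gcd(p2,q2) = 1. Let Γ be the additive submonoid of ℕ generated by g0 = p1·p2, g1 = q1·p2 and g2 = p1·p2·q1 + q2. Then the complement ℕ \ Γ is finite and its cardinality equals δ = (p1·q1·p2² + p2·q2 − p1·p2 − q1·p2 − q2 + 1)/2. -/
namespace DeltaNewtonAux

lemma eq_zero_of_dvd_mul_unit {p x g u : ℤ} (hu : p ∣ u * g - 1)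
    (hdvd : p ∣ x * g) (hx : |x| < p) : x = 0 := by
  have h1 : p ∣ x := by
    have h2 : p ∣ x * g * u := Dvd.dvd.mul_right hdvd u
    have h3 : p ∣ x * (u * g - 1) := Dvd.dvd.mul_left hu x
    have hx' : x = x * g * u - x * (u * g - 1) := by ring
    rw [hx']; exact dvd_sub h2 h3
  exact Int.eq_zero_of_abs_lt_dvd h1 hx

lemma exists_unit_mod {p q : ℕ} (h : Nat.gcd p q = 1) : ∃ u : ℤ, (p:ℤ) ∣ u * q - 1 := by
  refine ⟨Nat.gcdB p q, ⟨-(Nat.gcdA p q), ?_⟩⟩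
  have h2 := Nat.gcd_eq_gcd_ab p q
  rw [h] at h2
  push_cast at h2
  linear_combination -h2

lemma uniq {p1 q1 p2 q2 : ℕ} (hp1 : 0 < p1) (hp2 : 0 < p2)
    (hg1 : Nat.gcd p1 q1 = 1) (hg2 : Nat.gcd p2 q2 = 1)
    {a b c a' b' c' : ℤ}
    (hb0 : 0 ≤ b) (hb1 : b < p1) (hb0' : 0 ≤ b') (hb1' : b' < p1)
    (hc0 : 0 ≤ c) (hc1 : c < p2) (hc0' : 0 ≤ c') (hc1' : c' < p2)
    (h : a * ((p1:ℤ)*p2) + b * ((q1:ℤ)*p2) + c * ((p1:ℤ)*p2*q1+q2)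
       = a' * ((p1:ℤ)*p2) + b' * ((q1:ℤ)*p2) + c' * ((p1:ℤ)*p2*q1+q2)) :
    a = a' ∧ b = b' ∧ c = c' := by
  have hp2z : (0:ℤ) < p2 := by exact_mod_cast hp2
  have hp1z : (0:ℤ) < p1 := by exact_mod_cast hp1
  obtain ⟨u, w, hw⟩ := exists_unit_mod hg2
  have hu2 : (p2:ℤ) ∣ u * ((p1:ℤ)*p2*q1+q2) - 1 :=
    ⟨w + u*p1*q1, by linear_combination hw⟩
  have hdvd : (p2:ℤ) ∣ (c - c') * ((p1:ℤ)*p2*q1+q2) :=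
    ⟨(a' - a)*p1 + (b' - b)*q1, by linear_combination h⟩
  have hcc : c - c' = 0 := eq_zero_of_dvd_mul_unit hu2 hdvd (by rw [abs_lt]; omega)
  have hc : c = c' := by omega
  subst hc
  obtain ⟨v, w', hw'⟩ := exists_unit_mod hg1
  have hfac : ((a - a') * p1 + (b - b') * q1) * p2 = 0 := by linear_combination h
  have hfac2 : (a - a') * (p1:ℤ) + (b - b') * q1 = 0 := by
    rcases mul_eq_zero.mp hfac with h' | h'
    · exact h'
    · exact absurd h' (by positivity)
  have hv : (p1:ℤ) ∣ v * q1 - 1 := ⟨w', hw'⟩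
  have hdvd2 : (p1:ℤ) ∣ (b - b') * q1 := ⟨a' - a, by linear_combination hfac2⟩
  have hbb : b - b' = 0 := eq_zero_of_dvd_mul_unit hv hdvd2 (by rw [abs_lt]; omega)
  have hb : b = b' := by omega
  subst hb
  refine ⟨?_, rfl, rfl⟩
  have : (a - a') * ((p1:ℤ) * p2) = 0 := by linear_combination h
  rcases mul_eq_zero.mp this with h' | h'
  · omega
  · exact absurd h' (by positivity)

lemma exists_rep {p1 q1 p2 q2 : ℕ} (hp1 : 0 < p1) (hp2 : 0 < p2)
    (hg1 : Nat.gcd p1 q1 = 1) (hg2 : Nat.gcd p2 q2 = 1) (n : ℤ) :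
    ∃ a b c : ℤ, 0 ≤ b ∧ b < p1 ∧ 0 ≤ c ∧ c < p2 ∧
      n = a * ((p1:ℤ)*p2) + b * ((q1:ℤ)*p2) + c * ((p1:ℤ)*p2*q1+q2) := by
  have hp2z : (0:ℤ) < p2 := by exact_mod_cast hp2
  have hp1z : (0:ℤ) < p1 := by exact_mod_cast hp1
  obtain ⟨u, w, hw⟩ := exists_unit_mod hg2
  have hu2 : (p2:ℤ) ∣ u * ((p1:ℤ)*p2*q1+q2) - 1 :=
    ⟨w + u*p1*q1, by linear_combination hw⟩
  set c := n * u % p2 with hcdef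
  have hc0 : 0 ≤ c := Int.emod_nonneg _ (ne_of_gt hp2z)
  have hc1 : c < p2 := Int.emod_lt_of_pos _ hp2z
  have hdc : (p2:ℤ) ∣ n * u - c :=
    ⟨n * u / p2, by rw [hcdef]; linear_combination -Int.mul_ediv_add_emod (n*u) p2⟩
  have hdm : (p2:ℤ) ∣ n - c * ((p1:ℤ)*p2*q1+q2) := by
    obtain ⟨w1, hw1⟩ := hu2; obtain ⟨w2, hw2⟩ := hdc
    exact ⟨-(n*w1) + w2*((p1:ℤ)*p2*q1+q2),
      by linear_combination (-n) * hw1 + ((p1:ℤ)*p2*q1+q2) * hw2⟩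
  obtain ⟨m, hm⟩ := hdm
  obtain ⟨v, w', hw'⟩ := exists_unit_mod hg1
  have hv : (p1:ℤ) ∣ v * q1 - 1 := ⟨w', hw'⟩
  set b := m * v % p1 with hbdef
  have hb0 : 0 ≤ b := Int.emod_nonneg _ (ne_of_gt hp1z)
  have hb1 : b < p1 := Int.emod_lt_of_pos _ hp1z
  have hdb : (p1:ℤ) ∣ m * v - b :=
    ⟨m * v / p1, by rw [hbdef]; linear_combination -Int.mul_ediv_add_emod (m*v) p1⟩
  have hda : (p1:ℤ) ∣ m - b * q1 := by
    obtain ⟨w1, hw1⟩ := hv; obtain ⟨w2, hw2⟩ := hdb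
    exact ⟨-(m*w1) + w2*q1, by linear_combination (-m) * hw1 + (q1:ℤ) * hw2⟩
  obtain ⟨a, ha⟩ := hda
  exact ⟨a, b, c, hb0, hb1, hc0, hc1, by linear_combination hm + (p2:ℤ) * ha⟩

lemma mem_closure_iff {p1 q1 p2 q2 : ℕ} (n : ℕ) :
    n ∈ AddSubmonoid.closure ({p1 * p2, q1 * p2, p1 * p2 * q1 + q2} : Set ℕ) ↔
    ∃ x y z : ℕ, n = x * (p1*p2) + y * (q1*p2) + z * (p1*p2*q1+q2) := by
  constructor
  · intro h
    induction h using AddSubmonoid.closure_induction with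
    | mem x hx =>
      simp only [Set.mem_insert_iff, Set.mem_singleton_iff] at hx
      rcases hx with h | h | h
      · exact ⟨1, 0, 0, by simp [h]⟩
      · exact ⟨0, 1, 0, by simp [h]⟩
      · exact ⟨0, 0, 1, by simp [h]⟩
    | zero => exact ⟨0, 0, 0, by simp⟩
    | add x y hx hy ihx ihy =>
      obtain ⟨x1, y1, z1, h1⟩ := ihx
      obtain ⟨x2, y2, z2, h2⟩ := ihy
      exact ⟨x1+x2, y1+y2, z1+z2, by rw [h1, h2]; ring⟩
  · rintro ⟨x, y, z, rfl⟩
    have h0 : p1*p2 ∈ AddSubmonoid.closure ({p1 * p2, q1 * p2, p1 * p2 * q1 + q2} : Set ℕ) :=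
      AddSubmonoid.subset_closure (by simp)
    have h1 : q1*p2 ∈ AddSubmonoid.closure ({p1 * p2, q1 * p2, p1 * p2 * q1 + q2} : Set ℕ) :=
      AddSubmonoid.subset_closure (by simp)
    have h2 : p1*p2*q1+q2 ∈ AddSubmonoid.closure ({p1 * p2, q1 * p2, p1 * p2 * q1 + q2} : Set ℕ) :=
      AddSubmonoid.subset_closure (by simp)
    have m0 := AddSubmonoid.nsmul_mem _ h0 x
    have m1 := AddSubmonoid.nsmul_mem _ h1 y
    have m2 := AddSubmonoid.nsmul_mem _ h2 z
    rw [nsmul_eq_mul] at m0 m1 m2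
    exact add_mem (add_mem m0 m1) m2

lemma rep_two {p1 q1 : ℕ} (hp1 : 0 < p1) (hg1 : Nat.gcd p1 q1 = 1)
    (N : ℕ) (hN : (p1-1) * q1 ≤ N) : ∃ X Y : ℕ, Y < p1 ∧ N = X * p1 + Y * q1 := by
  have hp1z : (0:ℤ) < p1 := by exact_mod_cast hp1
  obtain ⟨v, w', hw'⟩ := exists_unit_mod hg1
  have hv : (p1:ℤ) ∣ v * q1 - 1 := ⟨w', hw'⟩
  set Yi := (N:ℤ) * v % p1 with hYdef
  have hY0 : 0 ≤ Yi := Int.emod_nonneg _ (ne_of_gt hp1z)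
  have hY1 : Yi < p1 := Int.emod_lt_of_pos _ hp1z
  have hdY : (p1:ℤ) ∣ (N:ℤ)*v - Yi :=
    ⟨(N:ℤ)*v / p1, by rw [hYdef]; linear_combination -Int.mul_ediv_add_emod ((N:ℤ)*v) p1⟩
  have hdX : (p1:ℤ) ∣ (N:ℤ) - Yi * q1 := by
    obtain ⟨w1, hw1⟩ := hv; obtain ⟨w2, hw2⟩ := hdY
    exact ⟨-((N:ℤ)*w1) + w2*q1, by linear_combination (-(N:ℤ)) * hw1 + (q1:ℤ) * hw2⟩
  obtain ⟨Xi, hXi⟩ := hdX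
  have hYle : Yi * q1 ≤ (N:ℤ) := by
    have h1 : Yi ≤ (p1:ℤ) - 1 := by omega
    have h2 : Yi * q1 ≤ ((p1:ℤ)-1) * q1 :=
      mul_le_mul_of_nonneg_right h1 (by positivity)
    have h3 : (((p1-1)*q1 : ℕ) : ℤ) ≤ (N:ℤ) := by exact_mod_cast hN
    rw [Nat.cast_mul, Nat.cast_sub hp1] at h3
    push_cast at h3
    linarith
  have hX0 : 0 ≤ Xi := by nlinarith
  refine ⟨Xi.toNat, Yi.toNat, by omega, ?_⟩
  have hfin : (N:ℤ) = (Xi.toNat : ℤ) * p1 + (Yi.toNat : ℤ) * q1 := by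
    rw [Int.toNat_of_nonneg hX0, Int.toNat_of_nonneg hY0]; linarith
  exact_mod_cast hfin

lemma mem_iff_nonneg {p1 q1 p2 q2 : ℕ} (hp1 : 0 < p1) (hp2 : 0 < p2)
    (hg1 : Nat.gcd p1 q1 = 1) (hg2 : Nat.gcd p2 q2 = 1)
    (n : ℕ) {a b c : ℤ} (hb0 : 0 ≤ b) (hb1 : b < p1) (hc0 : 0 ≤ c) (hc1 : c < p2)
    (hn : (n:ℤ) = a * ((p1:ℤ)*p2) + b * ((q1:ℤ)*p2) + c * ((p1:ℤ)*p2*q1+q2)) :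
    (n ∈ AddSubmonoid.closure ({p1 * p2, q1 * p2, p1 * p2 * q1 + q2} : Set ℕ) ↔ 0 ≤ a) := by
  constructor
  · intro h
    obtain ⟨x, y, z, hxyz⟩ := (mem_closure_iff n).mp h
    obtain ⟨X, Y, hY, hXY⟩ := rep_two hp1 hg1 (p1*p2*q1+q2) (by
      have h5 : (p1-1)*q1 ≤ p1*q1 := Nat.mul_le_mul_right _ (by omega)
      have h6 : p1*q1 ≤ p1*p2*q1 := by
        calc p1*q1 = p1*1*q1 := by ring
        _ ≤ p1*p2*q1 := Nat.mul_le_mul_right _ (Nat.mul_le_mul_left _ hp2)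
      omega)
    have hz : z = p2 * (z / p2) + z % p2 := (Nat.div_add_mod z p2).symm
    set k := z / p2 with hk
    set r := z % p2 with hr
    set y2 := y + k * Y with hy2def
    have hy2 : y2 = p1 * (y2 / p1) + y2 % p1 := (Nat.div_add_mod y2 p1).symm
    set j := y2 / p1 with hj
    set b' := y2 % p1 with hb'
    have h1 : (n:ℤ) = (x:ℤ) * ((p1:ℤ)*p2) + (y:ℤ) * ((q1:ℤ)*p2) + (z:ℤ) * ((p1:ℤ)*p2*q1+q2) := by
      exact_mod_cast hxyz
    have h2 : (z:ℤ) = (p2:ℤ) * k + r := by exact_mod_cast hz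
    have h3 : (y:ℤ) + (k:ℤ)*(Y:ℤ) = (p1:ℤ) * j + (b':ℤ) := by exact_mod_cast hy2
    have h4 : (p1:ℤ)*p2*q1+q2 = (X:ℤ)*p1 + (Y:ℤ)*q1 := by exact_mod_cast hXY
    have hrep : (n:ℤ) = ((x:ℤ) + k*X + j*q1) * ((p1:ℤ)*p2) + (b':ℤ) * ((q1:ℤ)*p2)
        + (r:ℤ) * ((p1:ℤ)*p2*q1+q2) := by
      linear_combination h1 + ((p1:ℤ)*p2*q1+q2) * h2 + ((q1:ℤ)*p2) * h3 + ((k:ℤ)*p2) * h4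
    have hrb : (b':ℤ) < p1 := by
      have : b' < p1 := Nat.mod_lt _ hp1
      exact_mod_cast this
    have hrc : (r:ℤ) < p2 := by
      have : r < p2 := Nat.mod_lt _ hp2
      exact_mod_cast this
    obtain ⟨ha, -, -⟩ := uniq hp1 hp2 hg1 hg2 hb0 hb1 (by positivity) hrb hc0 hc1
      (by positivity) hrc (hn.symm.trans hrep)
    have : (0:ℤ) ≤ (x:ℤ) + k*X + j*q1 := by positivity
    omega
  · intro ha
    have hcast : (n:ℤ) = ((a.toNat * (p1*p2) + b.toNat * (q1*p2) + c.toNat * (p1*p2*q1+q2) : ℕ) : ℤ) := by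
      push_cast
      rw [Int.toNat_of_nonneg ha, Int.toNat_of_nonneg hb0, Int.toNat_of_nonneg hc0]
      linear_combination hn
    exact (mem_closure_iff n).mpr ⟨a.toNat, b.toNat, c.toNat, by exact_mod_cast hcast⟩

end DeltaNewtonAux

/-- For a plane curve singularity with two Newton pairs `(p1,q1)(p2,q2)`, the complement of
its semigroup `Γ = ⟨p1·p2, q1·p2, p1·p2·q1 + q2⟩` in `ℕ` is finite, with cardinality equal to
the delta invariant `δ = (p1·q1·p2² + p2·q2 − p1·p2 − q1·p2 − q2 + 1)/2`. -/
theorem delta_invariant_of_two_newton_pairs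
    (p1 q1 p2 q2 : ℕ) (hp1 : 2 ≤ p1) (hp2 : 2 ≤ p2) (hq1 : 0 < q1) (hq2 : 0 < q2)
    (hlt : p1 < q1) (hgcd1 : Nat.gcd p1 q1 = 1) (hgcd2 : Nat.gcd p2 q2 = 1) :
    {n : ℕ | n ∉ AddSubmonoid.closure ({p1 * p2, q1 * p2, p1 * p2 * q1 + q2} : Set ℕ)}.Finite ∧
    {n : ℕ | n ∉ AddSubmonoid.closure ({p1 * p2, q1 * p2, p1 * p2 * q1 + q2} : Set ℕ)}.ncard =
      (p1 * q1 * p2 ^ 2 + p2 * q2 - p1 * p2 - q1 * p2 - q2 + 1) / 2 := by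
  classical
  have hp1' : 0 < p1 := by omega
  have hp2' : 0 < p2 := by omega
  have hp1z : (2:ℤ) ≤ p1 := by exact_mod_cast hp1
  have hp2z : (2:ℤ) ≤ p2 := by exact_mod_cast hp2
  have hq1z : (p1:ℤ) < q1 := by exact_mod_cast hlt
  have hq2z : (1:ℤ) ≤ q2 := by exact_mod_cast hq2
  set Γ := AddSubmonoid.closure ({p1 * p2, q1 * p2, p1 * p2 * q1 + q2} : Set ℕ) with hΓ
  set Fz : ℤ := -((p1:ℤ)*p2) + ((p1:ℤ)-1)*((q1:ℤ)*p2) + ((p2:ℤ)-1)*((p1:ℤ)*p2*q1+q2)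
    with hFzdef
  have hFz0 : (0:ℤ) ≤ Fz := by
    rw [hFzdef]
    have k2 : (p1:ℤ) ≤ ((p1:ℤ)-1)*q1 := by
      nlinarith [mul_le_mul_of_nonneg_left (show (p1:ℤ)+1 ≤ q1 by linarith)
          (show (0:ℤ) ≤ (p1:ℤ)-1 by linarith),
        mul_nonneg (show (0:ℤ) ≤ (p1:ℤ)-2 by linarith) (show (0:ℤ) ≤ (p1:ℤ) by linarith)]
    have key : (p1:ℤ)*p2 ≤ ((p1:ℤ)-1)*((q1:ℤ)*p2) := by
      nlinarith [mul_le_mul_of_nonneg_right k2 (show (0:ℤ) ≤ (p2:ℤ) by linarith)]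
    have last : (0:ℤ) ≤ ((p2:ℤ)-1)*((p1:ℤ)*p2*q1+q2) := by
      apply mul_nonneg (by linarith)
      positivity
    linarith
  set F : ℕ := Fz.toNat with hFdef
  have hFcast : (F:ℤ) = Fz := Int.toNat_of_nonneg hFz0
  -- every gap is at most F
  have hbound : ∀ n : ℕ, n ∉ Γ → n ≤ F := by
    intro n hn
    obtain ⟨a, b, c, hb0, hb1, hc0, hc1, hrep⟩ :=
      DeltaNewtonAux.exists_rep hp1' hp2' hgcd1 hgcd2 (n:ℤ)
    have hiff := DeltaNewtonAux.mem_iff_nonneg hp1' hp2' hgcd1 hgcd2 n hb0 hb1 hc0 hc1 hrep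
    have ha : a ≤ -1 := by
      by_contra hcon
      exact hn (hiff.mpr (by omega))
    have hle : (n:ℤ) ≤ Fz := by
      rw [hFzdef]
      have e1 : 0 ≤ ((p1:ℤ) - 1 - b) * ((q1:ℤ)*p2) := by
        apply mul_nonneg (by omega) (by positivity)
      have e2 : 0 ≤ ((p2:ℤ) - 1 - c) * ((p1:ℤ)*p2*q1+q2) := by
        apply mul_nonneg (by omega) (by positivity)
      have e3 : 0 ≤ (-1 - a) * ((p1:ℤ)*p2) := by
        apply mul_nonneg (by omega) (by positivity)
      nlinarith [hrep]
    have : (n:ℤ) ≤ (F:ℤ) := by rw [hFcast]; exact hle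
    exact_mod_cast this
  -- symmetry about F
  have hsymm : ∀ n : ℕ, n ≤ F → (n ∈ Γ ↔ (F - n) ∉ Γ) := by
    intro n hn
    obtain ⟨a, b, c, hb0, hb1, hc0, hc1, hrep⟩ :=
      DeltaNewtonAux.exists_rep hp1' hp2' hgcd1 hgcd2 (n:ℤ)
    have h1 := DeltaNewtonAux.mem_iff_nonneg hp1' hp2' hgcd1 hgcd2 n hb0 hb1 hc0 hc1 hrep
    have hrep2 : ((F - n : ℕ) : ℤ) = (-1-a) * ((p1:ℤ)*p2) + ((p1:ℤ)-1-b) * ((q1:ℤ)*p2)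
        + ((p2:ℤ)-1-c) * ((p1:ℤ)*p2*q1+q2) := by
      rw [Nat.cast_sub hn, hFcast, hFzdef]
      linear_combination -hrep
    have h2 := DeltaNewtonAux.mem_iff_nonneg hp1' hp2' hgcd1 hgcd2 (F - n)
      (by omega) (by omega) (by omega) (by omega) hrep2
    rw [h1, h2]
    omega
  set gaps := (Finset.range (F+1)).filter (fun n => n ∉ Γ) with hgaps
  have hset : {n : ℕ | n ∉ Γ} = ↑gaps := by
    ext n
    simp only [Set.mem_setOf_eq, hgaps, Finset.coe_filter, Finset.mem_range]
    constructor
    · intro h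
      exact ⟨by have := hbound n h; omega, h⟩
    · exact fun h => h.2
  constructor
  · rw [hset]; exact gaps.finite_toSet
  · rw [hset, Set.ncard_coe_finset]
    set nongaps := (Finset.range (F+1)).filter (fun n => n ∈ Γ) with hnon
    have hcardeq : gaps.card = nongaps.card := by
      apply Finset.card_bij (fun n _ => F - n)
      · intro n hn
        rw [hgaps, Finset.mem_filter, Finset.mem_range] at hn
        rw [hnon, Finset.mem_filter, Finset.mem_range]
        refine ⟨by omega, ?_⟩
        by_contra hcon
        exact hn.2 ((hsymm n (by omega)).mpr hcon)
      · intro n1 hn1 n2 hn2 h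
        rw [hgaps, Finset.mem_filter, Finset.mem_range] at hn1 hn2
        omega
      · intro m hm
        rw [hnon, Finset.mem_filter, Finset.mem_range] at hm
        refine ⟨F - m, ?_, by omega⟩
        rw [hgaps, Finset.mem_filter, Finset.mem_range]
        refine ⟨by omega, ?_⟩
        intro h
        have := (hsymm (F - m) (by omega)).mp h
        rw [Nat.sub_sub_self (by omega)] at this
        exact this hm.2
    have hsum : nongaps.card + gaps.card = F + 1 := by
      have h := Finset.card_filter_add_card_filter_not
        (s := Finset.range (F+1)) (p := fun n => n ∈ Γ)
      simpa using h
    have h2card : 2 * gaps.card = F + 1 := by omega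
    have hFz1 : ((F:ℤ) + 1) + (p1:ℤ)*p2 + (q1:ℤ)*p2 + (q2:ℤ)
        = (p1:ℤ)*q1*(p2:ℤ)^2 + (p2:ℤ)*q2 + 1 := by
      rw [hFcast, hFzdef]; ring
    have hnat : (F + 1) + p1*p2 + q1*p2 + q2 = p1*q1*p2^2 + p2*q2 + 1 := by
      exact_mod_cast hFz1
    set A := p1*q1*p2^2 with hA
    set B := p2*q2 with hB
    set C := p1*p2 with hC
    set D := q1*p2 with hD
    omega
end

section
/- Let p1, p2, q1, q2 be positive integers with p1 ≥ 2, p2 ≥ 2, p1 < q1, gcd(p1,q1) = 1 and gcd(p2,q2) = 1. Let Γ be the additive submonoid of ℕ generated by g0 = p1·p2, g1 = q1·p2 and g2 = p1·p2·q1 + q2, and set δ = (p1·q1·p2² + p2·q2 − p1·p2 − q1·p2 − q2 + 1)/2. Then the largest element of ℕ \ Γ equals 2δ − 1; that is, 2δ − 1 ∉ Γ and every integer n ≥ 2δ belongs to Γ. -/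
private lemma exists_mul_mod' (a b n : ℕ) (ha : 0 < a) (h : Nat.Coprime b a) :
    ∃ y, y < a ∧ y * b ≡ n [MOD a] := by
  haveI : NeZero a := ⟨ha.ne'⟩
  set u : (ZMod a)ˣ := ZMod.unitOfCoprime b h with hu
  refine ⟨((n : ZMod a) * ((u⁻¹ : (ZMod a)ˣ) : ZMod a)).val, ZMod.val_lt _, ?_⟩
  have key : ((((n : ZMod a) * ((u⁻¹ : (ZMod a)ˣ) : ZMod a)).val * b : ℕ) : ZMod a)
      = (n : ZMod a) := by
    push_cast
    rw [ZMod.natCast_val, ZMod.cast_id]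
    have hb : ((b : ℕ) : ZMod a) = (u : ZMod a) := by simp [hu]
    rw [hb, mul_assoc, Units.inv_mul, mul_one]
  exact (ZMod.natCast_eq_natCast_iff _ _ _).mp key

private lemma rep_of_le' (a b n : ℕ) (ha : 0 < a) (h : Nat.Coprime b a)
    (hn : (a - 1) * (b - 1) ≤ n) : ∃ x y, y < a ∧ n = x * a + y * b := by
  obtain ⟨y, hy, hmod⟩ := exists_mul_mod' a b n ha h
  have hyb : y * b ≤ n := by
    by_contra hc
    push_neg at hc
    have hd : a ∣ y * b - n := (Nat.modEq_iff_dvd' (le_of_lt hc)).mp hmod.symm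
    have hbd : y * b - n ≤ a - 1 := by
      have h1 : y * b ≤ (a - 1) * b := Nat.mul_le_mul_right b (by omega)
      have h2 : (a - 1) * (b - 1) + (a - 1) = (a - 1) * b ∨ b = 0 := by
        rcases Nat.eq_zero_or_pos b with hb | hb
        · right; exact hb
        · left
          have hb1 : b - 1 + 1 = b := by omega
          calc (a - 1) * (b - 1) + (a - 1) = (a - 1) * ((b - 1) + 1) := by ring
          _ = (a - 1) * b := by rw [hb1]
      rcases h2 with h2 | h2
      · omega
      · subst h2; simp at hc
    have hpos : 0 < y * b - n := by omega
    have := Nat.le_of_dvd hpos hd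
    omega
  have hd : a ∣ n - y * b := (Nat.modEq_iff_dvd' hyb).mp hmod
  refine ⟨(n - y * b) / a, y, hy, ?_⟩
  rw [Nat.div_mul_cancel hd]
  omega

private lemma mem3' (a b c x y z : ℕ) :
    x * a + y * b + z * c ∈ AddSubmonoid.closure ({a, b, c} : Set ℕ) := by
  have ha : a ∈ AddSubmonoid.closure ({a, b, c} : Set ℕ) :=
    AddSubmonoid.subset_closure (by simp)
  have hb : b ∈ AddSubmonoid.closure ({a, b, c} : Set ℕ) :=
    AddSubmonoid.subset_closure (by simp)
  have hc : c ∈ AddSubmonoid.closure ({a, b, c} : Set ℕ) :=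
    AddSubmonoid.subset_closure (by simp)
  have h1 := AddSubmonoid.nsmul_mem _ ha x
  have h2 := AddSubmonoid.nsmul_mem _ hb y
  have h3 := AddSubmonoid.nsmul_mem _ hc z
  simp only [nsmul_eq_mul] at h1 h2 h3
  exact add_mem (add_mem h1 h2) h3

private lemma rep3' (a b c n : ℕ) (h : n ∈ AddSubmonoid.closure ({a, b, c} : Set ℕ)) :
    ∃ x y z, n = x * a + y * b + z * c := by
  induction h using AddSubmonoid.closure_induction with
  | mem w hw =>
    rcases hw with h | h | h
    · exact ⟨1, 0, 0, by simp [h]⟩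
    · exact ⟨0, 1, 0, by simp [h]⟩
    · simp only [Set.mem_singleton_iff] at h
      exact ⟨0, 0, 1, by simp [h]⟩
  | zero => exact ⟨0, 0, 0, by simp⟩
  | add u v _ _ ihu ihv =>
    obtain ⟨x1, y1, z1, rfl⟩ := ihu
    obtain ⟨x2, y2, z2, rfl⟩ := ihv
    exact ⟨x1 + x2, y1 + y2, z1 + z2, by ring⟩

/-- For a plane curve singularity with two Newton pairs `(p1,q1)(p2,q2)` with semigroup
`Γ = ⟨p1·p2, q1·p2, p1·p2·q1 + q2⟩` and delta invariant
`δ = (p1·q1·p2² + p2·q2 − p1·p2 − q1·p2 − q2 + 1)/2`, the largest element of `ℕ \ Γ` is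
`2δ − 1`: that element is not in `Γ`, and every `n ≥ 2δ` is in `Γ`. -/
theorem frobenius_of_two_newton_pairs
    (p1 q1 p2 q2 : ℕ) (hp1 : 2 ≤ p1) (hp2 : 2 ≤ p2) (hq1 : 0 < q1) (hq2 : 0 < q2)
    (hlt : p1 < q1) (hgcd1 : Nat.gcd p1 q1 = 1) (hgcd2 : Nat.gcd p2 q2 = 1)
    (δ : ℕ) (hδ : δ = (p1 * q1 * p2 ^ 2 + p2 * q2 - p1 * p2 - q1 * p2 - q2 + 1) / 2) :
    2 * δ - 1 ∉ AddSubmonoid.closure ({p1 * p2, q1 * p2, p1 * p2 * q1 + q2} : Set ℕ) ∧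
    ∀ n : ℕ, 2 * δ ≤ n →
      n ∈ AddSubmonoid.closure ({p1 * p2, q1 * p2, p1 * p2 * q1 + q2} : Set ℕ) := by
  -- ARITHMETIC CORE: `2δ - 1 + p1·p2 = (p1-1)·(q1·p2) + (p2-1)·(p1·p2·q1 + q2)` and `1 ≤ δ`
  have hMδ : 2 * δ - 1 + p1 * p2
      = (p1 - 1) * (q1 * p2) + (p2 - 1) * (p1 * p2 * q1 + q2) ∧ 1 ≤ δ := by
    have h1 : ¬(Even p1 ∧ Even q1) := by
      rintro ⟨he1, he2⟩
      have := Nat.dvd_gcd he1.two_dvd he2.two_dvd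
      omega
    have h2 : ¬(Even p2 ∧ Even q2) := by
      rintro ⟨he1, he2⟩
      have := Nat.dvd_gcd he1.two_dvd he2.two_dvd
      omega
    have hpar : Even (p1 * q1 * p2 ^ 2 + p2 * q2 + 1 + (p1 * p2 + q1 * p2 + q2)) := by
      simp only [Nat.even_add, Nat.even_mul, Nat.even_pow]
      tauto
    rw [Nat.even_iff] at hpar
    have hadd : p1 + q1 ≤ p1 * q1 := Nat.add_le_mul hp1 (by omega)
    have hB : p1 * p2 + q1 * p2 + q2 ≤ p1 * q1 * p2 ^ 2 + p2 * q2 := by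
      have e1 : p1 * p2 + q1 * p2 = (p1 + q1) * p2 := by ring
      have e2 : (p1 + q1) * p2 ≤ (p1 * q1) * p2 := Nat.mul_le_mul_right _ hadd
      have e3 : p1 * q1 * p2 ≤ p1 * q1 * p2 ^ 2 := by
        have e : p1 * q1 * p2 ^ 2 = (p1 * q1 * p2) * p2 := by ring
        rw [e]; exact Nat.le_mul_of_pos_right _ (by omega)
      have e4 : q2 ≤ p2 * q2 := Nat.le_mul_of_pos_left _ (by omega)
      omega
    have key : 2 * δ + (p1 * p2 + q1 * p2 + q2) = p1 * q1 * p2 ^ 2 + p2 * q2 + 1 := by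
      subst hδ; omega
    have r3 : p1 * (q1 * p2) + p2 * (p1 * p2 * q1 + q2)
        = p1 * q1 * p2 ^ 2 + p2 * q2 + p1 * q1 * p2 := by ring
    have r4 : p1 * p2 * q1 + q2 = p1 * q1 * p2 + q2 := by ring
    have r2' : p1 * q1 * p2 + q2 ≤ p2 * (p1 * p2 * q1 + q2) := by
      have e1 : p2 * (p1 * p2 * q1 + q2) = (p1 * q1 * p2) * p2 + q2 * p2 := by ring
      have e2 : p1 * q1 * p2 ≤ (p1 * q1 * p2) * p2 := Nat.le_mul_of_pos_right _ (by omega)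
      have e3 : q2 ≤ q2 * p2 := Nat.le_mul_of_pos_right _ (by omega)
      omega
    have rB2 : q1 * p2 ≤ p1 * (q1 * p2) := Nat.le_mul_of_pos_left _ (by omega)
    rw [Nat.sub_one_mul, Nat.sub_one_mul]
    omega
  obtain ⟨hM, hδ1⟩ := hMδ
  -- common modular fact : q2 ≡ g2 [MOD p2]
  have hg2mod : q2 ≡ p1 * p2 * q1 + q2 [MOD p2] :=
    (Nat.modEq_iff_dvd' (by omega)).mpr ⟨p1 * q1, by rw [Nat.add_sub_cancel]; ring⟩
  constructor
  · -- NON-MEMBERSHIP of 2δ - 1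
    intro hmem
    obtain ⟨x, y, z, hxyz⟩ := rep3' _ _ _ _ hmem
    -- relation p2·g2 = α·g0 + β·g1
    have hbd : (p1 - 1) * (q1 - 1) ≤ p1 * p2 * q1 + q2 := by
      have e1 : (p1 - 1) * (q1 - 1) ≤ p1 * q1 := Nat.mul_le_mul (by omega) (by omega)
      have e2 : p1 * q1 ≤ p1 * p2 * q1 := by
        have e : p1 * p2 * q1 = (p1 * q1) * p2 := by ring
        rw [e]; exact Nat.le_mul_of_pos_right _ (by omega)
      omega
    obtain ⟨α, β, hβ, hαβ⟩ := rep_of_le' p1 q1 _ (by omega) (Nat.Coprime.symm hgcd1) hbd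
    have hrel : p2 * (p1 * p2 * q1 + q2) = α * (p1 * p2) + β * (q1 * p2) := by
      calc p2 * (p1 * p2 * q1 + q2) = (α * p1 + β * q1) * p2 := by rw [← hαβ]; ring
      _ = α * (p1 * p2) + β * (q1 * p2) := by ring
    obtain ⟨k, z2, hz2, hzz⟩ : ∃ k z2, z2 < p2 ∧ z = p2 * k + z2 :=
      ⟨z / p2, z % p2, Nat.mod_lt _ (by omega), (Nat.div_add_mod z p2).symm⟩
    obtain ⟨j, y2, hy2, hyy⟩ : ∃ j y2, y2 < p1 ∧ p1 * j + y2 = y + k * β :=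
      ⟨(y + k * β) / p1, (y + k * β) % p1, Nat.mod_lt _ (by omega), Nat.div_add_mod _ p1⟩
    set x3 := x + k * α + j * q1 with hx3
    have hEq : 2 * δ - 1 = x3 * (p1 * p2) + y2 * (q1 * p2) + z2 * (p1 * p2 * q1 + q2) := by
      rw [hxyz, hx3]
      zify at hrel hyy hzz ⊢
      linear_combination ((p1 : ℤ) * p2 * q1 + q2) * hzz + (k : ℤ) * hrel
        - ((q1 : ℤ) * p2) * hyy
    have e1 : (x3 + 1) * (p1 * p2) = x3 * (p1 * p2) + p1 * p2 := by ring
    have Etot : (x3 + 1) * (p1 * p2) + y2 * (q1 * p2) + z2 * (p1 * p2 * q1 + q2)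
        = (p1 - 1) * (q1 * p2) + (p2 - 1) * (p1 * p2 * q1 + q2) := by omega
    have m1 : (x3 + 1) * (p1 * p2) ≡ 0 [MOD p2] :=
      (Nat.modEq_zero_iff_dvd).mpr ⟨(x3 + 1) * p1, by ring⟩
    have m2 : y2 * (q1 * p2) ≡ 0 [MOD p2] :=
      (Nat.modEq_zero_iff_dvd).mpr ⟨y2 * q1, by ring⟩
    have m3 : z2 * q2 ≡ z2 * (p1 * p2 * q1 + q2) [MOD p2] := hg2mod.mul_left z2
    have m4 : (p1 - 1) * (q1 * p2) ≡ 0 [MOD p2] :=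
      (Nat.modEq_zero_iff_dvd).mpr ⟨(p1 - 1) * q1, by ring⟩
    have m5 : (p2 - 1) * q2 ≡ (p2 - 1) * (p1 * p2 * q1 + q2) [MOD p2] := hg2mod.mul_left _
    have hzq : z2 * q2 ≡ (p2 - 1) * q2 [MOD p2] := by
      have A : (x3 + 1) * (p1 * p2) + y2 * (q1 * p2) + z2 * (p1 * p2 * q1 + q2)
          ≡ 0 + 0 + z2 * q2 [MOD p2] := (m1.add m2).add m3.symm
      have B : (p1 - 1) * (q1 * p2) + (p2 - 1) * (p1 * p2 * q1 + q2)
          ≡ 0 + (p2 - 1) * q2 [MOD p2] := m4.add m5.symm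
      rw [Etot] at A
      simpa using A.symm.trans B
    have hz2eq : z2 = p2 - 1 := by
      have h := Nat.ModEq.cancel_right_of_coprime hgcd2 hzq
      have h1 : z2 % p2 = (p2 - 1) % p2 := h
      rw [Nat.mod_eq_of_lt hz2, Nat.mod_eq_of_lt (by omega)] at h1
      exact h1
    rw [hz2eq] at Etot
    have Etot2 : (x3 + 1) * (p1 * p2) + y2 * (q1 * p2) = (p1 - 1) * (q1 * p2) := by omega
    have Ediv : ((x3 + 1) * p1 + y2 * q1) * p2 = ((p1 - 1) * q1) * p2 := by
      calc ((x3 + 1) * p1 + y2 * q1) * p2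
          = (x3 + 1) * (p1 * p2) + y2 * (q1 * p2) := by ring
      _ = (p1 - 1) * (q1 * p2) := Etot2
      _ = ((p1 - 1) * q1) * p2 := by ring
    have E2 : (x3 + 1) * p1 + y2 * q1 = (p1 - 1) * q1 :=
      Nat.eq_of_mul_eq_mul_right (by omega) Ediv
    have n1 : (x3 + 1) * p1 ≡ 0 [MOD p1] :=
      (Nat.modEq_zero_iff_dvd).mpr ⟨x3 + 1, by ring⟩
    have hyq : y2 * q1 ≡ (p1 - 1) * q1 [MOD p1] := by
      have A : (x3 + 1) * p1 + y2 * q1 ≡ 0 + y2 * q1 [MOD p1] := n1.add_right _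
      rw [E2] at A
      simpa using A.symm
    have hy2eq : y2 = p1 - 1 := by
      have h := Nat.ModEq.cancel_right_of_coprime hgcd1 hyq
      have h1 : y2 % p1 = (p1 - 1) % p1 := h
      rw [Nat.mod_eq_of_lt hy2, Nat.mod_eq_of_lt (by omega)] at h1
      exact h1
    rw [hy2eq] at E2
    have hzero : (x3 + 1) * p1 = 0 := by omega
    rcases Nat.mul_eq_zero.mp hzero with h | h <;> omega
  · -- MEMBERSHIP for n ≥ 2δ
    intro n hn
    obtain ⟨z, hz, hznmod⟩ := exists_mul_mod' p2 q2 n (by omega) (Nat.Coprime.symm hgcd2)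
    have hW : p1 * p2 ≤ (p1 - 1) * (q1 * p2) := by
      have h0 : 1 * p1 ≤ (p1 - 1) * q1 := Nat.mul_le_mul (by omega) (by omega)
      have h1 : ((p1 - 1) * q1) * p2 = (p1 - 1) * (q1 * p2) := by ring
      have h2 : (1 * p1) * p2 ≤ ((p1 - 1) * q1) * p2 := Nat.mul_le_mul_right _ h0
      have h3 : (1 * p1) * p2 = p1 * p2 := by ring
      omega
    have h1 : z * (p1 * p2 * q1 + q2) ≤ (p2 - 1) * (p1 * p2 * q1 + q2) :=
      Nat.mul_le_mul_right _ (by omega)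
    have hzg : z * (p1 * p2 * q1 + q2) ≤ 2 * δ - 1 := by omega
    have hmodn : z * (p1 * p2 * q1 + q2) ≡ n [MOD p2] :=
      ((hg2mod.mul_left z).symm).trans hznmod
    have hdvd : p2 ∣ n - z * (p1 * p2 * q1 + q2) :=
      (Nat.modEq_iff_dvd' (by omega)).mp hmodn
    obtain ⟨m, hm⟩ := hdvd
    have hm' : n = p2 * m + z * (p1 * p2 * q1 + q2) := by omega
    have hmp : ((p1 - 1) * q1) * p2 < (m + p1) * p2 := by
      have e1 : (m + p1) * p2 = p2 * m + p1 * p2 := by ring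
      have e2 : ((p1 - 1) * q1) * p2 = (p1 - 1) * (q1 * p2) := by ring
      omega
    have hmq : (p1 - 1) * q1 < m + p1 :=
      lt_of_mul_lt_mul_right hmp (Nat.zero_le _)
    have hmbound : (p1 - 1) * (q1 - 1) ≤ m := by
      have e : (p1 - 1) * (q1 - 1) + (p1 - 1) = (p1 - 1) * q1 := by
        have h' : q1 - 1 + 1 = q1 := by omega
        calc (p1 - 1) * (q1 - 1) + (p1 - 1) = (p1 - 1) * ((q1 - 1) + 1) := by ring
        _ = (p1 - 1) * q1 := by rw [h']
      omega
    obtain ⟨xx, yy, hyy, hmrep⟩ := rep_of_le' p1 q1 m (by omega) (Nat.Coprime.symm hgcd1) hmbound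
    have hrepn : n = xx * (p1 * p2) + yy * (q1 * p2) + z * (p1 * p2 * q1 + q2) := by
      rw [hm', hmrep]; ring
    rw [hrepn]
    exact mem3' _ _ _ _ _ _
end

section
/- Fix integers n ≥ 3 and m ≥ 2, and set d = n·m. Let Γ be the additive submonoid of ℕ generated by g0 = (n−1)·m, g1 = n·m and g2 = n²·m − 1 (the semigroup of the singularity of type (n−1, n)(m, nm−1)), and let R(n') = #(Γ ∩ [0,n']). Then R(j·d) = (j+1)(j+2)/2 for every integer j with 0 ≤ j ≤ d−3. -/
/-- Uniqueness of quotient/remainder. -/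
lemma bl_divmod_unique {p q r s N : ℕ} (hr : r < N) (hs : s < N)
    (h : p * N + r = q * N + s) : p = q ∧ r = s := by
  have hN : 0 < N := lt_of_le_of_lt (Nat.zero_le r) hr
  rw [mul_comm p N, mul_comm q N] at h
  have h1 := congrArg (· % N) h
  simp only [Nat.mul_add_mod] at h1
  rw [Nat.mod_eq_of_lt hr, Nat.mod_eq_of_lt hs] at h1
  subst h1
  have h2 : N * p = N * q := by omega
  exact ⟨Nat.eq_of_mul_eq_mul_left hN h2, rfl⟩

/-- Any element of the closure of a 3-element set is a ℕ-combination. -/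
lemma bl_rep3 {g0 g1 g2 x : ℕ}
    (hx : x ∈ AddSubmonoid.closure ({g0, g1, g2} : Set ℕ)) :
    ∃ a b c : ℕ, x = a * g0 + b * g1 + c * g2 := by
  induction hx using AddSubmonoid.closure_induction with
  | mem y hy =>
    rcases hy with rfl | rfl | rfl
    · exact ⟨1, 0, 0, by ring⟩
    · exact ⟨0, 1, 0, by ring⟩
    · exact ⟨0, 0, 1, by ring⟩
  | zero => exact ⟨0, 0, 0, by ring⟩
  | add x y hx hy ihx ihy =>
    obtain ⟨a, b, c, rfl⟩ := ihx
    obtain ⟨a', b', c', rfl⟩ := ihy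
    exact ⟨a + a', b + b', c + c', by ring⟩

/-- Arithmetic step for injectivity. -/
lemma bl_step {n a b a' b' : ℕ} (hn : 1 ≤ n)
    (h : a * (n - 1) + b * n = a' * (n - 1) + b' * n) :
    (a + b) * n + a' = (a' + b') * n + a := by
  zify [hn] at h ⊢
  linear_combination h

/-- The canonical parametrization map. -/
def blF (n m : ℕ) (p : ℕ × ℕ) : ℕ :=
  (p.1 % n) * ((n - 1) * m) + p.2 * (n * m) + (p.1 / n) * (n ^ 2 * m - 1)

/-- Family (iii): for `n ≥ 3`, `m ≥ 2` and `d = n·m`, the semigroup generated by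
`(n−1)·m`, `n·m`, `n²·m − 1` (singularity of type `(n−1,n)(m,nm−1)`) satisfies the
Borodzik–Livingston counting condition `R(j·d) = (j+1)(j+2)/2` for `0 ≤ j ≤ d−3`. -/
theorem counting_condition_family_iii
    (n m d : ℕ) (hn : 3 ≤ n) (hm : 2 ≤ m) (hd : d = n * m) :
    ∀ j : ℕ, j ≤ d - 3 →
      {x : ℕ | x ∈ AddSubmonoid.closure ({(n - 1) * m, n * m, n ^ 2 * m - 1} : Set ℕ) ∧
        x ≤ j * d}.ncard = (j + 1) * (j + 2) / 2 := by
  intro j hj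
  have hn0 : 0 < n := by omega
  have hm0 : 0 < m := by omega
  have hn1 : 1 ≤ n := by omega
  have hnm1 : 1 ≤ n * m := Nat.mul_pos hn0 hm0
  have hn2m1 : 1 ≤ n ^ 2 * m := Nat.mul_pos (pow_pos hn0 2) hm0
  have h6 : 6 ≤ d := by
    rw [hd]
    calc (6:ℕ) = 3 * 2 := rfl
    _ ≤ n * m := Nat.mul_le_mul hn hm
  have hjd : j < d := by omega
  -- the triangle
  set T : Finset (ℕ × ℕ) := (Finset.range (j + 1)).biUnion (fun s => Finset.HasAntidiagonal.antidiagonal s)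
    with hT
  have hTmem : ∀ p : ℕ × ℕ, p ∈ T ↔ p.1 + p.2 ≤ j := by
    intro p
    simp only [hT, Finset.mem_biUnion, Finset.mem_range, Finset.HasAntidiagonal.mem_antidiagonal]
    constructor
    · rintro ⟨s, hs, rfl⟩; omega
    · intro h; exact ⟨p.1 + p.2, by omega, rfl⟩
  have hTcard : T.card = (j + 1) * (j + 2) / 2 := by
    have h1 : T.card = ∑ s ∈ Finset.range (j + 1), (s + 1) := by
      rw [hT, Finset.card_biUnion]
      · exact Finset.sum_congr rfl fun s _ => Finset.Nat.card_antidiagonal s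
      · intro x _ y _ hxy
        refine Finset.disjoint_left.mpr fun p hp hp' => hxy ?_
        rw [← Finset.HasAntidiagonal.mem_antidiagonal.mp hp, Finset.HasAntidiagonal.mem_antidiagonal.mp hp']
    have h2 : (∑ s ∈ Finset.range (j + 1), (s + 1)) * 2 = (j + 2) * (j + 1) := by
      have h3 := Finset.sum_range_id_mul_two (j + 2)
      rw [Finset.sum_range_succ' (fun i => i) (j + 1)] at h3
      simpa using h3
    rw [h1]
    refine (Nat.div_eq_of_eq_mul_left (by norm_num) ?_).symm
    rw [mul_comm (j + 1) (j + 2), ← h2]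
  -- value identity
  have key : ∀ a b c : ℕ,
      (a * ((n - 1) * m) + b * (n * m) + c * (n ^ 2 * m - 1)) + c
        = (a * (n - 1) + b * n + c * n ^ 2) * m := by
    intro a b c
    zify [hn1, hn2m1]
    ring
  -- membership of values in the closure
  have hmemcl : ∀ a b c : ℕ,
      a * ((n - 1) * m) + b * (n * m) + c * (n ^ 2 * m - 1)
        ∈ AddSubmonoid.closure ({(n - 1) * m, n * m, n ^ 2 * m - 1} : Set ℕ) := by
    intro a b c
    have hmul : ∀ (k x : ℕ), x ∈ AddSubmonoid.closure ({(n-1)*m, n*m, n^2*m-1} : Set ℕ) →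
        k * x ∈ AddSubmonoid.closure ({(n-1)*m, n*m, n^2*m-1} : Set ℕ) := by
      intro k x hx
      have h := AddSubmonoid.nsmul_mem _ hx k
      simpa [nsmul_eq_mul] using h
    refine add_mem (add_mem (hmul _ _ ?_) (hmul _ _ ?_)) (hmul _ _ ?_) <;>
      apply AddSubmonoid.subset_closure <;> simp
  -- normalization of representations
  have hnorm : ∀ a b c : ℕ, ∃ a' b' c' : ℕ, a' < n ∧ c' < m ∧
      a * ((n - 1) * m) + b * (n * m) + c * (n ^ 2 * m - 1)
        = a' * ((n - 1) * m) + b' * (n * m) + c' * (n ^ 2 * m - 1) := by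
    intro a b c
    obtain ⟨q, r, hr, rfl⟩ : ∃ q r, r < m ∧ c = m * q + r :=
      ⟨c / m, c % m, Nat.mod_lt _ hm0, (Nat.div_add_mod c m).symm⟩
    obtain ⟨q2, a', ha', hqa⟩ : ∃ q2 a', a' < n ∧ a + q = n * q2 + a' :=
      ⟨(a + q) / n, (a + q) % n, Nat.mod_lt _ hn0, (Nat.div_add_mod (a + q) n).symm⟩
    refine ⟨a', b + q * (n * m - 1) + q2 * (n - 1), r, ha', hr, ?_⟩
    have hqaz : (a : ℤ) + q = n * q2 + a' := by exact_mod_cast hqa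
    zify [hn1, hnm1, hn2m1]
    linear_combination (((n:ℤ) - 1) * m) * hqaz
  -- the set equality
  have hset : {x : ℕ | x ∈ AddSubmonoid.closure ({(n - 1) * m, n * m, n ^ 2 * m - 1} : Set ℕ) ∧
        x ≤ j * d} = blF n m '' ↑T := by
    ext x
    simp only [Set.mem_setOf_eq, Set.mem_image, Finset.mem_coe]
    constructor
    · rintro ⟨hxcl, hxle⟩
      obtain ⟨a, b, c, rfl⟩ := bl_rep3 hxcl
      obtain ⟨a', b', c', ha', hc', heq⟩ := hnorm a b c
      rw [heq] at hxle
      rw [hd] at hxle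
      have hbound : a' + b' + c' * n ≤ j := by
        by_contra hlt
        push_neg at hlt
        have h1 := key a' b' c'
        have h2 : (j + 1) * (n * m) ≤ (a' + b' + c' * n) * (n * m) :=
          Nat.mul_le_mul_right _ (by omega)
        have h3 : (a' + b' + c' * n) * (n * m)
            = (a' * (n - 1) + b' * n + c' * n ^ 2) * m + a' * m := by
          zify [hn1]; ring
        have h4 : a' * m + m = (a' + 1) * m := by ring
        have h5 : (a' + 1) * m ≤ n * m := Nat.mul_le_mul_right m (by omega)
        have h6' : (j + 1) * (n * m) = j * (n * m) + n * m := by ring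
        omega
      refine ⟨(n * c' + a', b'), ?_, ?_⟩
      · rw [hTmem]
        have h7 : n * c' + a' + b' = a' + b' + c' * n := by ring
        simp only []
        omega
      · rw [heq]
        simp only [blF]
        rw [Nat.mul_add_div hn0, Nat.mul_add_mod, Nat.mod_eq_of_lt ha',
          Nat.div_eq_of_lt ha', Nat.add_zero]
    · rintro ⟨⟨u, b⟩, hub, rfl⟩
      rw [hTmem] at hub
      simp only at hub
      refine ⟨hmemcl _ _ _, ?_⟩
      have hsum : u % n + b + (u / n) * n = u + b := by
        have h := Nat.mod_add_div u n
        calc u % n + b + (u / n) * n = (u % n + n * (u / n)) + b := by ring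
        _ = u + b := by rw [h]
      calc blF n m (u, b)
          ≤ (u % n) * (n * m) + b * (n * m) + (u / n) * (n ^ 2 * m) := by
            simp only [blF]
            gcongr
            · exact Nat.sub_le n 1
            · exact Nat.sub_le _ _
        _ = ((u % n + b + (u / n) * n)) * (n * m) := by ring
        _ = (u + b) * (n * m) := by rw [hsum]
        _ ≤ j * (n * m) := Nat.mul_le_mul_right _ hub
        _ = j * d := by rw [hd]
  -- injectivity on the triangle
  have hinj : Set.InjOn (blF n m) ↑T := by
    rintro ⟨u, b⟩ hu ⟨v, b'⟩ hv heq
    have hu' : u + b ≤ j := (hTmem _).mp hu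
    have hv' : v + b' ≤ j := (hTmem _).mp hv
    have hud : u < n * m := by rw [← hd]; omega
    have hvd : v < n * m := by rw [← hd]; omega
    have hdu : u / n < m := (Nat.div_lt_iff_lt_mul hn0).mpr (by rw [mul_comm m n]; exact hud)
    have hdv : v / n < m := (Nat.div_lt_iff_lt_mul hn0).mpr (by rw [mul_comm m n]; exact hvd)
    have e1 := key (u % n) b (u / n)
    have e2 := key (v % n) b' (v / n)
    have heq' : blF n m (u, b) = blF n m (v, b') := heq
    simp only [blF] at heq'
    rw [heq'] at e1
    have e3 : ((u % n) * (n - 1) + b * n + (u / n) * n ^ 2) * m + v / n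
        = ((v % n) * (n - 1) + b' * n + (v / n) * n ^ 2) * m + u / n := by
      omega
    obtain ⟨hA, hc⟩ := bl_divmod_unique hdv hdu e3
    rw [hc] at hA
    have e4 : (u % n) * (n - 1) + b * n = (v % n) * (n - 1) + b' * n := by omega
    have e5 := bl_step hn1 e4
    obtain ⟨hs, ha⟩ := bl_divmod_unique (Nat.mod_lt v hn0) (Nat.mod_lt u hn0) e5
    have hb : b = b' := by
      rw [ha] at hs
      omega
    have huv : u = v := by
      calc u = u % n + n * (u / n) := (Nat.mod_add_div u n).symm
      _ = v % n + n * (v / n) := by rw [← ha, ← hc]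
      _ = v := Nat.mod_add_div v n
    simp [huv, hb]
  rw [hset, Set.ncard_image_of_injOn hinj, Set.ncard_coe_finset, hTcard]
end

section
/- Fix integers n ≥ 2 and m ≥ 2, and set d = 2·n·m. Let Γ be the additive submonoid of ℕ generated by g0 = n·m, g1 = (4n−1)·m and g2 = 4n²·m − 1 (the semigroup of the singularity of type (n, 4n−1)(m, nm−1)), and let R(n') = #(Γ ∩ [0,n']). Then R(j·d) = (j+1)(j+2)/2 for every integer j with 0 ≤ j ≤ d−3. -/
private lemma split_unique {K b1 c1 b2 c2 : ℕ} (hc1 : c1 < K) (hc2 : c2 < K)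
    (h : b1 * K + c1 = b2 * K + c2) : b1 = b2 ∧ c1 = c2 := by
  have e1 : (b1 * K + c1) % K = c1 := by simp [Nat.add_mod, Nat.mul_mod_left, Nat.mod_eq_of_lt hc1]
  have e2 : (b2 * K + c2) % K = c2 := by simp [Nat.add_mod, Nat.mul_mod_left, Nat.mod_eq_of_lt hc2]
  have hc : c1 = c2 := by rw [← e1, ← e2, h]
  subst hc
  have hb : b1 * K = b2 * K := by omega
  exact ⟨Nat.eq_of_mul_eq_mul_right (by omega) hb, rfl⟩

private def Gfun (j : ℕ) : ℕ := ∑ e ∈ Finset.range (j / 2 + 1), (2 * j + 1 - 4 * e)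

private lemma Gfun_succ (j : ℕ) : Gfun (j + 1) = Gfun j + (j + 2) := by
  rcases Nat.even_or_odd j with ⟨s, rfl⟩ | ⟨s, rfl⟩
  · have h1 : (s + s + 1) / 2 = s := by omega
    have h2 : (s + s) / 2 = s := by omega
    unfold Gfun
    rw [h1, h2]
    have hcong : ∀ e ∈ Finset.range (s + 1),
        2 * (s + s + 1) + 1 - 4 * e = (2 * (s + s) + 1 - 4 * e) + 2 := by
      intro e he
      rw [Finset.mem_range] at he
      omega
    rw [Finset.sum_congr rfl hcong, Finset.sum_add_distrib, Finset.sum_const,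
      Finset.card_range, smul_eq_mul]
    set S := ∑ e ∈ Finset.range (s + 1), (2 * (s + s) + 1 - 4 * e)
    omega
  · have h1 : (2 * s + 1) / 2 = s := by omega
    have h2 : (2 * s + 1 + 1) / 2 = s + 1 := by omega
    unfold Gfun
    rw [h1, h2, Finset.sum_range_succ]
    have hcong : ∀ e ∈ Finset.range (s + 1),
        2 * (2 * s + 1 + 1) + 1 - 4 * e = (2 * (2 * s + 1) + 1 - 4 * e) + 2 := by
      intro e he
      rw [Finset.mem_range] at he
      omega
    rw [Finset.sum_congr rfl hcong, Finset.sum_add_distrib, Finset.sum_const,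
      Finset.card_range, smul_eq_mul]
    set S := ∑ e ∈ Finset.range (s + 1), (2 * (2 * s + 1) + 1 - 4 * e)
    omega

private lemma Gfun_eq (j : ℕ) : 2 * Gfun j = (j + 1) * (j + 2) := by
  induction j with
  | zero => simp [Gfun]
  | succ k ih => rw [Gfun_succ, Nat.mul_add, ih]; ring

private lemma count_a (j C : ℕ) :
    ((Finset.range (2 * j + 1)).filter fun a => a + C ≤ 2 * j).card = 2 * j + 1 - C := by
  have h : (Finset.range (2 * j + 1)).filter (fun a => a + C ≤ 2 * j)
      = Finset.range (2 * j + 1 - C) := by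
    ext x
    simp only [Finset.mem_filter, Finset.mem_range]
    omega
  rw [h, Finset.card_range]

private lemma reindex (n m : ℕ) (hn : 0 < n) (h : ℕ → ℕ) :
    ∑ p ∈ Finset.range n ×ˢ Finset.range m, h (p.1 + n * p.2)
      = ∑ e ∈ Finset.range (n * m), h e := by
  apply Finset.sum_nbij' (i := fun p => p.1 + n * p.2) (j := fun e => (e % n, e / n))
  · intro p hp
    rw [Finset.mem_product, Finset.mem_range, Finset.mem_range] at hp
    rw [Finset.mem_range]
    calc p.1 + n * p.2 < n + n * p.2 := by omega
      _ ≤ n * m := by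
          have : p.2 + 1 ≤ m := hp.2
          calc n + n * p.2 = n * (p.2 + 1) := by ring
            _ ≤ n * m := Nat.mul_le_mul_left n this
  · intro e he
    rw [Finset.mem_range] at he
    rw [Finset.mem_product, Finset.mem_range, Finset.mem_range]
    exact ⟨Nat.mod_lt _ hn, Nat.div_lt_of_lt_mul he⟩
  · intro p hp
    rw [Finset.mem_product, Finset.mem_range, Finset.mem_range] at hp
    have h1 : (p.1 + n * p.2) % n = p.1 := by
      rw [Nat.add_mul_mod_self_left, Nat.mod_eq_of_lt hp.1]
    have h2 : (p.1 + n * p.2) / n = p.2 := by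
      rw [Nat.add_mul_div_left _ _ hn, Nat.div_eq_of_lt hp.1, Nat.zero_add]
    rw [h1, h2]
  · intro e he
    simp [Nat.mod_add_div]
  · intro p hp
    rfl

private lemma rep_eq (n m a b c : ℕ) (hn : 2 ≤ n) (hm : 2 ≤ m) :
    a * (n * m) + b * ((4 * n - 1) * m) + c * (4 * n ^ 2 * m - 1) + (b * m + c)
      = (a + 4 * (b + n * c)) * (n * m) := by
  have h1 : 1 ≤ 4 * n ^ 2 * m := by nlinarith
  have h2 : 1 ≤ 4 * n := by omega
  zify [h1, h2]
  ring

private lemma key_iff (n m j a b c : ℕ) (hn : 2 ≤ n) (hm : 2 ≤ m)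
    (hb : b < n) (hc : c < m) :
    a * (n * m) + b * ((4 * n - 1) * m) + c * (4 * n ^ 2 * m - 1) ≤ j * (2 * n * m)
      ↔ a + 4 * (b + n * c) ≤ 2 * j := by
  have hr : b * m + c < n * m := by
    have h := Nat.mul_le_mul_right m (show b + 1 ≤ n from hb)
    rw [add_mul, one_mul] at h
    omega
  have h4 := rep_eq n m a b c hn hm
  have hq : j * (2 * n * m) = 2 * j * (n * m) := by ring
  rw [hq]
  constructor
  · intro h
    by_contra hcon
    push_neg at hcon
    have h3 : (2 * j + 1) * (n * m) ≤ (a + 4 * (b + n * c)) * (n * m) :=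
      Nat.mul_le_mul_right _ (by omega)
    rw [add_mul, one_mul] at h3
    omega
  · intro h
    have h3 : (a + 4 * (b + n * c)) * (n * m) ≤ 2 * j * (n * m) :=
      Nat.mul_le_mul_right _ h
    omega

private lemma inj_lemma (n m : ℕ) (hn : 2 ≤ n) (hm : 2 ≤ m) {a1 b1 c1 a2 b2 c2 : ℕ}
    (hb1 : b1 < n) (hc1 : c1 < m) (hb2 : b2 < n) (hc2 : c2 < m)
    (h : a1 * (n * m) + b1 * ((4 * n - 1) * m) + c1 * (4 * n ^ 2 * m - 1)
       = a2 * (n * m) + b2 * ((4 * n - 1) * m) + c2 * (4 * n ^ 2 * m - 1)) :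
    a1 = a2 ∧ b1 = b2 ∧ c1 = c2 := by
  have r1 : b1 * m + c1 < n * m := by
    have hh := Nat.mul_le_mul_right m (show b1 + 1 ≤ n from hb1)
    rw [add_mul, one_mul] at hh; omega
  have r2 : b2 * m + c2 < n * m := by
    have hh := Nat.mul_le_mul_right m (show b2 + 1 ≤ n from hb2)
    rw [add_mul, one_mul] at hh; omega
  have e1 := rep_eq n m a1 b1 c1 hn hm
  have e2 := rep_eq n m a2 b2 c2 hn hm
  have hAB : (a1 + 4 * (b1 + n * c1)) * (n * m) + (b2 * m + c2)
      = (a2 + 4 * (b2 + n * c2)) * (n * m) + (b1 * m + c1) := by omega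
  obtain ⟨hA, hR⟩ := split_unique r2 r1 hAB
  obtain ⟨hbb, hcc⟩ := split_unique hc2 hc1 hR
  refine ⟨?_, hbb.symm, hcc.symm⟩
  subst hbb hcc
  omega

private lemma reduce (n m a b c : ℕ) (hn : 2 ≤ n) (hm : 2 ≤ m) :
    ∃ a' b' c', b' < n ∧ c' < m ∧
      a * (n * m) + b * ((4 * n - 1) * m) + c * (4 * n ^ 2 * m - 1)
        = a' * (n * m) + b' * ((4 * n - 1) * m) + c' * (4 * n ^ 2 * m - 1) := by
  have h1 : 1 ≤ 4 * n ^ 2 * m := by nlinarith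
  have h2 : 1 ≤ 4 * n := by omega
  have h3 : 1 ≤ n * m := by nlinarith
  obtain ⟨q2, r2, hr2, rfl⟩ : ∃ q r, r < m ∧ c = m * q + r :=
    ⟨c / m, c % m, Nat.mod_lt _ (by omega), (Nat.div_add_mod c m).symm⟩
  obtain ⟨q1, r1, hr1, hb⟩ : ∃ q r, r < n ∧ b + q2 = n * q + r :=
    ⟨(b + q2) / n, (b + q2) % n, Nat.mod_lt _ (by omega), (Nat.div_add_mod (b + q2) n).symm⟩
  refine ⟨a + q2 * (4 * (n * m - 1)) + q1 * (4 * n - 1), r1, r2, hr1, hr2, ?_⟩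
  have hb' : (b : ℤ) + q2 = n * q1 + r1 := by exact_mod_cast congrArg (Nat.cast : ℕ → ℤ) hb
  zify [h1, h2, h3]
  linear_combination ((4 * (n : ℤ) - 1) * m) * hb'

private lemma mem_closure_triple {u v w x : ℕ} :
    x ∈ AddSubmonoid.closure ({u, v, w} : Set ℕ) ↔ ∃ a b c : ℕ, x = a * u + b * v + c * w := by
  constructor
  · intro hx
    induction hx using AddSubmonoid.closure_induction with
    | mem y hy =>
      rcases hy with rfl | rfl | rfl
      · exact ⟨1, 0, 0, by ring⟩
      · exact ⟨0, 1, 0, by ring⟩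
      · exact ⟨0, 0, 1, by ring⟩
    | zero => exact ⟨0, 0, 0, by ring⟩
    | add y z _ _ hy hz =>
      obtain ⟨a1, b1, c1, rfl⟩ := hy
      obtain ⟨a2, b2, c2, rfl⟩ := hz
      exact ⟨a1 + a2, b1 + b2, c1 + c2, by ring⟩
  · rintro ⟨a, b, c, rfl⟩
    have key : ∀ (k y : ℕ), y ∈ ({u, v, w} : Set ℕ) →
        k * y ∈ AddSubmonoid.closure ({u, v, w} : Set ℕ) := by
      intro k y hy
      simpa [smul_eq_mul] using
        AddSubmonoid.nsmul_mem _ (AddSubmonoid.subset_closure hy) k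
    exact add_mem (add_mem (key a u (by simp)) (key b v (by simp))) (key c w (by simp))


/-- Family (iv): for `n ≥ 2`, `m ≥ 2` and `d = 2·n·m`, the semigroup generated by
`n·m`, `(4n−1)·m`, `4n²·m − 1` (singularity of type `(n,4n−1)(m,nm−1)`) satisfies the
Borodzik–Livingston counting condition `R(j·d) = (j+1)(j+2)/2` for `0 ≤ j ≤ d−3`. -/
theorem counting_condition_family_iv
    (n m d : ℕ) (hn : 2 ≤ n) (hm : 2 ≤ m) (hd : d = 2 * n * m) :
    ∀ j : ℕ, j ≤ d - 3 →
      {x : ℕ | x ∈ AddSubmonoid.closure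
          ({n * m, (4 * n - 1) * m, 4 * n ^ 2 * m - 1} : Set ℕ) ∧
        x ≤ j * d}.ncard = (j + 1) * (j + 2) / 2 := by
  subst hd
  intro j hj
  classical
  have hnm : 4 ≤ n * m := by calc (4:ℕ) = 2 * 2 := rfl
                                _ ≤ n * m := Nat.mul_le_mul hn hm
  have h2nm : 2 * n * m = 2 * (n * m) := by ring
  set f : ℕ × ℕ × ℕ → ℕ :=
    fun p => p.1 * (n * m) + p.2.1 * ((4 * n - 1) * m) + p.2.2 * (4 * n ^ 2 * m - 1) with hf
  set T : Finset (ℕ × ℕ × ℕ) :=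
    (Finset.range (2 * j + 1) ×ˢ Finset.range n ×ˢ Finset.range m).filter
      (fun p => p.1 + 4 * (p.2.1 + n * p.2.2) ≤ 2 * j) with hT
  have hset : {x : ℕ | x ∈ AddSubmonoid.closure
      ({n * m, (4 * n - 1) * m, 4 * n ^ 2 * m - 1} : Set ℕ) ∧ x ≤ j * (2 * n * m)}
      = ↑(T.image f) := by
    ext x
    simp only [Set.mem_setOf_eq, Finset.coe_image, Set.mem_image, Finset.mem_coe, hT, hf,
      Finset.mem_filter, Finset.mem_product, Finset.mem_range]
    constructor
    · rintro ⟨hmem, hle⟩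
      obtain ⟨a, b, c, rfl⟩ := mem_closure_triple.mp hmem
      obtain ⟨a', b', c', hb', hc', heq⟩ := reduce n m a b c hn hm
      rw [heq] at hle
      have hkey := (key_iff n m j a' b' c' hn hm hb' hc').mp hle
      exact ⟨(a', b', c'), ⟨⟨by omega, hb', hc'⟩, hkey⟩, heq.symm⟩
    · rintro ⟨⟨a, b, c⟩, ⟨⟨ha, hb, hc⟩, hcond⟩, rfl⟩
      exact ⟨mem_closure_triple.mpr ⟨a, b, c, rfl⟩,
        (key_iff n m j a b c hn hm hb hc).mpr hcond⟩
  rw [hset, Set.ncard_coe_finset]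
  have hinj : Set.InjOn f ↑T := by
    rintro ⟨a1, b1, c1⟩ h1 ⟨a2, b2, c2⟩ h2 heq
    simp only [hT, Finset.coe_filter, Set.mem_setOf_eq, Finset.mem_product,
      Finset.mem_range] at h1 h2
    simp only [hf] at heq
    obtain ⟨hA, hB, hC⟩ := inj_lemma n m hn hm h1.1.2.1 h1.1.2.2 h2.1.2.1 h2.1.2.2 heq
    simp [hA, hB, hC]
  rw [Finset.card_image_of_injOn hinj]
  have hTcard : T.card = Gfun j := by
    rw [hT, Finset.card_filter, Finset.sum_product, Finset.sum_comm]
    have step1 : ∀ q ∈ Finset.range n ×ˢ Finset.range m,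
        (∑ a ∈ Finset.range (2 * j + 1),
          if a + 4 * (q.1 + n * q.2) ≤ 2 * j then 1 else 0)
          = 2 * j + 1 - 4 * (q.1 + n * q.2) := by
      intro q _
      rw [← Finset.card_filter]
      exact count_a j _
    rw [Finset.sum_congr rfl step1,
      reindex n m (by omega) (fun e => 2 * j + 1 - 4 * e)]
    unfold Gfun
    refine (Finset.sum_subset ?_ ?_).symm
    · intro e he
      rw [Finset.mem_range] at he ⊢
      omega
    · intro e _ hne
      rw [Finset.mem_range] at hne
      omega
  rw [hTcard]
  have := Gfun_eq j
  omega
end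

section
/- For all integers k ≥ 2 and l ≥ 0, gcd(l·F(2k−1)² + F(2k−3)², l·F(2k+1)² + F(2k−1)² + 2) = 1. (This guarantees that the first Newton pair (p1, q1) = (l·F(2k−1)² + F(2k−3)², l·F(2k+1)² + F(2k−1)² + 2) of families (i) and (ii) of the classification is a valid Newton pair.) -/
lemma catalan_fib_odd : ∀ m : ℕ, Nat.fib (2 * m + 1) * Nat.fib (2 * m + 5) = Nat.fib (2 * m + 3) ^ 2 + 1 := by
  intro m
  induction m with
  | zero => decide
  | succ n ih =>
    have e3 : Nat.fib (2 * n + 3) = Nat.fib (2 * n + 1) + Nat.fib (2 * n + 2) := by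
      rw [show 2 * n + 3 = (2 * n + 1) + 2 from by ring, Nat.fib_add_two,
        show (2 * n + 1) + 1 = 2 * n + 2 from by ring]
    have e4 : Nat.fib (2 * n + 4) = Nat.fib (2 * n + 1) + 2 * Nat.fib (2 * n + 2) := by
      rw [show 2 * n + 4 = (2 * n + 2) + 2 from by ring, Nat.fib_add_two,
        show (2 * n + 2) + 1 = 2 * n + 3 from by ring, e3]; ring
    have e5 : Nat.fib (2 * n + 5) = 2 * Nat.fib (2 * n + 1) + 3 * Nat.fib (2 * n + 2) := by
      rw [show 2 * n + 5 = (2 * n + 3) + 2 from by ring, Nat.fib_add_two,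
        show (2 * n + 3) + 1 = 2 * n + 4 from by ring, e3, e4]; ring
    have e6 : Nat.fib (2 * n + 6) = 3 * Nat.fib (2 * n + 1) + 5 * Nat.fib (2 * n + 2) := by
      rw [show 2 * n + 6 = (2 * n + 4) + 2 from by ring, Nat.fib_add_two,
        show (2 * n + 4) + 1 = 2 * n + 5 from by ring, e4, e5]; ring
    have e7 : Nat.fib (2 * n + 7) = 5 * Nat.fib (2 * n + 1) + 8 * Nat.fib (2 * n + 2) := by
      rw [show 2 * n + 7 = (2 * n + 5) + 2 from by ring, Nat.fib_add_two,
        show (2 * n + 5) + 1 = 2 * n + 6 from by ring, e5, e6]; ring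
    rw [e5, e3] at ih
    rw [show 2 * (n + 1) + 1 = 2 * n + 3 from by ring,
      show 2 * (n + 1) + 5 = 2 * n + 7 from by ring,
      show 2 * (n + 1) + 3 = 2 * n + 5 from by ring, e3, e5, e7]
    nlinarith [ih]

/-- For all `k ≥ 2` and `l ≥ 0`, the entries of the first Newton pair
`(l·F(2k−1)² + F(2k−3)², l·F(2k+1)² + F(2k−1)² + 2)` of families (i) and (ii) are coprime. -/
theorem gcd_first_newton_pair (k l : ℕ) (hk : 2 ≤ k) :
    Nat.gcd (l * (Nat.fib (2 * k - 1)) ^ 2 + (Nat.fib (2 * k - 3)) ^ 2)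
      (l * (Nat.fib (2 * k + 1)) ^ 2 + (Nat.fib (2 * k - 1)) ^ 2 + 2) = 1 := by
  obtain ⟨m, rfl⟩ : ∃ m, k = m + 2 := ⟨k - 2, by omega⟩
  have h1 : 2 * (m + 2) - 3 = 2 * m + 1 := by omega
  have h2 : 2 * (m + 2) - 1 = 2 * m + 3 := by omega
  have h3 : 2 * (m + 2) + 1 = 2 * m + 5 := by omega
  rw [h1, h2, h3]
  set b := Nat.fib (2 * m + 1)
  set a := Nat.fib (2 * m + 3)
  set c := Nat.fib (2 * m + 5)
  have hcat : b * c = a ^ 2 + 1 := catalan_fib_odd m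
  set X := l * a ^ 2 + b ^ 2 with hX
  set Y := l * c ^ 2 + a ^ 2 + 2 with hY
  set d := Nat.gcd X Y with hd
  have hdX : (d : ℤ) ∣ (X : ℤ) := Int.natCast_dvd_natCast.2 (Nat.gcd_dvd_left X Y)
  have hdY : (d : ℤ) ∣ (Y : ℤ) := Int.natCast_dvd_natCast.2 (Nat.gcd_dvd_right X Y)
  have key : (c : ℤ) ^ 2 * X - (a : ℤ) ^ 2 * Y = 1 := by
    have hcat' : (b : ℤ) * c = (a : ℤ) ^ 2 + 1 := by exact_mod_cast hcat
    push_cast [hX, hY]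
    nlinarith [hcat']
  have : (d : ℤ) ∣ 1 := key ▸ dvd_sub (Dvd.dvd.mul_left hdX _) (Dvd.dvd.mul_left hdY _)
  have : d ∣ 1 := Int.natCast_dvd_natCast.1 (by exact_mod_cast this)
  exact Nat.dvd_one.1 this
end

section
/- Fix integers k ≥ 2 and l ≥ 0, and set p1 = l·F(2k−1)² + F(2k−3)², q1 = l·F(2k+1)² + F(2k−1)² + 2, p2 = F(2k−1)², q2 = p1, and d = F(2k−1)·F(2k+1)·p1. Then the degree–genus relation holds: (d−1)·(d−2) = p1·q1·p2² + p2·q2 − p1·p2 − q1·p2 − q2 + 1. -/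
/-- `F(n+4) + F(n) = 3 F(n+2)`. -/
lemma fib_add_four (n : ℕ) : Nat.fib (n + 4) + Nat.fib n = 3 * Nat.fib (n + 2) := by
  have h1 : Nat.fib (n + 4) = Nat.fib (n + 2) + Nat.fib (n + 3) := Nat.fib_add_two
  have h2 : Nat.fib (n + 3) = Nat.fib (n + 1) + Nat.fib (n + 2) := Nat.fib_add_two
  have h3 : Nat.fib (n + 2) = Nat.fib n + Nat.fib (n + 1) := Nat.fib_add_two
  omega

lemma fib_three (m : ℕ) :
    Nat.fib (2 * m + 5) + Nat.fib (2 * m + 1) = 3 * Nat.fib (2 * m + 3) := by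
  have := fib_add_four (2 * m + 1)
  rw [show 2 * m + 1 + 4 = 2 * m + 5 by omega, show 2 * m + 1 + 2 = 2 * m + 3 by omega] at this
  omega

/-- Catalan-type identity at odd indices: `F(2m+1)·F(2m+5) = F(2m+3)² + 1`. -/
lemma fib_catalan (m : ℕ) :
    Nat.fib (2 * m + 1) * Nat.fib (2 * m + 5) = Nat.fib (2 * m + 3) ^ 2 + 1 := by
  induction m with
  | zero => decide
  | succ n ih =>
      have h2 := fib_three n
      have h2'' := fib_three (n + 1)
      rw [show 2 * (n + 1) + 5 = 2 * n + 7 by omega,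
          show 2 * (n + 1) + 1 = 2 * n + 3 by omega,
          show 2 * (n + 1) + 3 = 2 * n + 5 by omega] at h2'' ⊢
      have hA : ((Nat.fib (2 * n + 1) : ℤ)) * Nat.fib (2 * n + 5)
          = (Nat.fib (2 * n + 3) : ℤ) ^ 2 + 1 := by exact_mod_cast ih
      have hB : ((Nat.fib (2 * n + 5) : ℤ)) + Nat.fib (2 * n + 1)
          = 3 * Nat.fib (2 * n + 3) := by exact_mod_cast h2
      have hB' : ((Nat.fib (2 * n + 7) : ℤ)) + Nat.fib (2 * n + 3)
          = 3 * Nat.fib (2 * n + 5) := by exact_mod_cast h2''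
      have : ((Nat.fib (2 * n + 3) : ℤ)) * Nat.fib (2 * n + 7)
          = (Nat.fib (2 * n + 5) : ℤ) ^ 2 + 1 := by
        linear_combination (Nat.fib (2 * n + 3) : ℤ) * hB'
          - (Nat.fib (2 * n + 5) : ℤ) * hB + hA
      exact_mod_cast this

/-- The degree–genus relation for family (i): with `p1 = l·F(2k−1)² + F(2k−3)²`,
`q1 = l·F(2k+1)² + F(2k−1)² + 2`, `p2 = F(2k−1)²`, `q2 = p1`, and
`d = F(2k−1)·F(2k+1)·p1`, one has
`(d−1)(d−2) = p1·q1·p2² + p2·q2 − p1·p2 − q1·p2 − q2 + 1`. -/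
theorem degree_genus_family_i
    (k l p1 q1 p2 q2 d : ℕ) (hk : 2 ≤ k)
    (hp1 : p1 = l * (Nat.fib (2 * k - 1)) ^ 2 + (Nat.fib (2 * k - 3)) ^ 2)
    (hq1 : q1 = l * (Nat.fib (2 * k + 1)) ^ 2 + (Nat.fib (2 * k - 1)) ^ 2 + 2)
    (hp2 : p2 = (Nat.fib (2 * k - 1)) ^ 2)
    (hq2 : q2 = p1)
    (hd : d = Nat.fib (2 * k - 1) * Nat.fib (2 * k + 1) * p1) :
    ((d : ℤ) - 1) * ((d : ℤ) - 2) =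
      (p1 : ℤ) * q1 * (p2 : ℤ) ^ 2 + (p2 : ℤ) * q2 - (p1 : ℤ) * p2 - (q1 : ℤ) * p2
        - (q2 : ℤ) + 1 := by
  obtain ⟨m, rfl⟩ : ∃ m, k = m + 2 := ⟨k - 2, by omega⟩
  subst hq2 hd hp2 hq1 hp1
  rw [show 2 * (m + 2) - 3 = 2 * m + 1 by omega,
      show 2 * (m + 2) - 1 = 2 * m + 3 by omega,
      show 2 * (m + 2) + 1 = 2 * m + 5 by omega]
  have h1 : ((Nat.fib (2 * m + 1) : ℤ)) * Nat.fib (2 * m + 5)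
      = (Nat.fib (2 * m + 3) : ℤ) ^ 2 + 1 := by exact_mod_cast fib_catalan m
  have h2 : ((Nat.fib (2 * m + 1) : ℤ)) + Nat.fib (2 * m + 5)
      = 3 * Nat.fib (2 * m + 3) := by
    have := fib_three m; exact_mod_cast by omega
  push_cast
  set A : ℤ := (Nat.fib (2 * m + 1) : ℤ)
  set B : ℤ := (Nat.fib (2 * m + 3) : ℤ)
  set C : ℤ := (Nat.fib (2 * m + 5) : ℤ)
  linear_combination (((l : ℤ) * B ^ 2 + A ^ 2) * C) * h2
    + ((((l : ℤ) * B ^ 2 + A ^ 2) * B ^ 2 - 1) * (A * C + B ^ 2 + 1)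
        - ((l : ℤ) * B ^ 2 + A ^ 2)) * h1
end

section
/- Fix integers k ≥ 3 and l ≥ 0, and set p1 = l·F(2k−1)² + F(2k−3)², q1 = l·F(2k+1)² + F(2k−1)² + 2, p2 = F(2k−1), q2 = l·F(2k−1) + F(2k−5), and d = F(2k+1)·p1. Then the degree–genus relation holds: (d−1)·(d−2) = p1·q1·p2² + p2·q2 − p1·p2 − q1·p2 − q2 + 1. -/
lemma cassini (n : ℕ) :
    (Nat.fib n : ℤ) * Nat.fib (n + 2) - (Nat.fib (n + 1) : ℤ) ^ 2 = (-1) ^ (n + 1) := by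
  induction n with
  | zero => simp
  | succ n ih =>
    have h1 : Nat.fib (n + 2) = Nat.fib n + Nat.fib (n + 1) := Nat.fib_add_two
    have h2 : Nat.fib (n + 3) = Nat.fib (n + 1) + Nat.fib (n + 2) := Nat.fib_add_two
    push_cast [h2, h1] at *
    ring_nf
    ring_nf at ih
    linarith [ih]

/-- The degree–genus relation for family (ii): with `p1 = l·F(2k−1)² + F(2k−3)²`,
`q1 = l·F(2k+1)² + F(2k−1)² + 2`, `p2 = F(2k−1)`, `q2 = l·F(2k−1) + F(2k−5)`, and
`d = F(2k+1)·p1`, one has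
`(d−1)(d−2) = p1·q1·p2² + p2·q2 − p1·p2 − q1·p2 − q2 + 1`. -/
theorem degree_genus_family_ii
    (k l p1 q1 p2 q2 d : ℕ) (hk : 3 ≤ k)
    (hp1 : p1 = l * (Nat.fib (2 * k - 1)) ^ 2 + (Nat.fib (2 * k - 3)) ^ 2)
    (hq1 : q1 = l * (Nat.fib (2 * k + 1)) ^ 2 + (Nat.fib (2 * k - 1)) ^ 2 + 2)
    (hp2 : p2 = Nat.fib (2 * k - 1))
    (hq2 : q2 = l * Nat.fib (2 * k - 1) + Nat.fib (2 * k - 5))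
    (hd : d = Nat.fib (2 * k + 1) * p1) :
    ((d : ℤ) - 1) * ((d : ℤ) - 2) =
      (p1 : ℤ) * q1 * (p2 : ℤ) ^ 2 + (p2 : ℤ) * q2 - (p1 : ℤ) * p2 - (q1 : ℤ) * p2
        - (q2 : ℤ) + 1 := by
  obtain ⟨m, rfl⟩ : ∃ m, k = m + 3 := ⟨k - 3, by omega⟩
  have e5 : 2 * (m + 3) - 5 = 2 * m + 1 := by omega
  have e3 : 2 * (m + 3) - 3 = 2 * m + 3 := by omega
  have e1 : 2 * (m + 3) - 1 = 2 * m + 5 := by omega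
  have e7 : 2 * (m + 3) + 1 = 2 * m + 7 := by omega
  rw [e5] at hq2; rw [e3] at hp1; rw [e1] at hp1 hq1 hp2 hq2; rw [e7] at hq1 hd
  set a : ℤ := (Nat.fib (2 * m + 1) : ℤ) with ha
  set b : ℤ := (Nat.fib (2 * m + 2) : ℤ) with hb
  have h3 : (Nat.fib (2 * m + 3) : ℤ) = a + b := by
    rw [show 2 * m + 3 = (2 * m + 1) + 2 from rfl, Nat.fib_add_two]; push_cast; ring
  have h4 : (Nat.fib (2 * m + 4) : ℤ) = a + 2 * b := by
    rw [show 2 * m + 4 = (2 * m + 2) + 2 from rfl, Nat.fib_add_two]; push_cast [← h3]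
    rw [h3]; ring
  have h5 : (Nat.fib (2 * m + 5) : ℤ) = 2 * a + 3 * b := by
    rw [show 2 * m + 5 = (2 * m + 3) + 2 from rfl, Nat.fib_add_two]; push_cast [← h3, ← h4]
    rw [h3, h4]; ring
  have h6 : (Nat.fib (2 * m + 6) : ℤ) = 3 * a + 5 * b := by
    rw [show 2 * m + 6 = (2 * m + 4) + 2 from rfl, Nat.fib_add_two]; push_cast [← h4, ← h5]
    rw [h4, h5]; ring
  have h7 : (Nat.fib (2 * m + 7) : ℤ) = 5 * a + 8 * b := by
    rw [show 2 * m + 7 = (2 * m + 5) + 2 from rfl, Nat.fib_add_two]; push_cast [← h5, ← h6]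
    rw [h5, h6]; ring
  have hc : a * (a + b) - b ^ 2 = 1 := by
    have := cassini (2 * m + 1)
    rw [show (2 * m + 1) + 2 = 2 * m + 3 from rfl, show (2 * m + 1) + 1 = 2 * m + 2 from rfl] at this
    rw [h3] at this
    simpa [pow_succ, pow_mul, ← ha, ← hb] using this
  subst hp1 hq1 hp2 hq2 hd
  push_cast [h3, h5, h7, ← ha]
  linear_combination (36*a^4*(l:ℤ) + 9*a^4 + 208*a^3*b*l + 43*a^3*b + 449*a^2*b^2*l
    + 76*a^2*b^2 + 4*a^2*l + a^2 + 429*a*b^3*l + 59*a*b^3 - 2*a*l - 5*a + 12*a*b*l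
    + 2*a*b + 153*b^4*l + 17*b^4 + 9*b^2*l + b^2 - 3*b*l - 6*b - 1) * hc
end
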